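/- The number of ascent sequences of length n avoiding the pattern 021 equals the n-th Catalan number C_n. -/

import Mathlib

open Filter Topology

/-- Number of ascents in a sequence (list) of naturals. -/
def asc (s : List ℕ) : ℕ :=
  ((s.zip s.tail).filter (fun p => p.1 < p.2)).length

/-- `s` is an ascent sequence: first entry `0`, and each later entry is at most
one more than the number of ascents of the preceding prefix. -/
def IsAscentSeq (s : List ℕ) : Prop :=
  (0 < s.length → s.getD 0 0 = 0) ∧
  ∀ i, 0 < i → i < s.length → s.getD i 0 ≤ asc (s.take i) + 1

/-- `s` is a weak ascent sequence: every entry is at most the number of ascents. -/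
def IsWeakAscentSeq (s : List ℕ) : Prop :=
  ∀ x ∈ s, x ≤ asc s

/-- `s` contains the pattern `p`: some subsequence of `s` is order-isomorphic
(including equalities) to `p`. -/
def ContainsPattern (s p : List ℕ) : Prop :=
  ∃ idx : Fin p.length → ℕ, StrictMono idx ∧ (∀ a, idx a < s.length) ∧
    ∀ a b : Fin p.length, p.get a < p.get b ↔ s.getD (idx a) 0 < s.getD (idx b) 0

def AvoidsPattern (s p : List ℕ) : Prop := ¬ ContainsPattern s p

/-- A pattern of length `j` is a permutation of `0,…,j-1`. -/
def IsPattern (p : List ℕ) : Prop := List.Perm p (List.range p.length)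

/-- Sum-indecomposable: no proper prefix whose entries are all smaller than
all entries of the complementary suffix. -/
def SumIndecomposable (p : List ℕ) : Prop :=
  ¬ ∃ i, 0 < i ∧ i < p.length ∧ ∀ x ∈ p.take i, ∀ y ∈ p.drop i, x < y

/-- Number of `p`-avoiding ascent sequences of length `k`. -/
noncomputable def ascentAvoidCount (p : List ℕ) (k : ℕ) : ℕ :=
  {s : List ℕ | s.length = k ∧ IsAscentSeq s ∧ AvoidsPattern s p}.ncard

/-- Number of `p`-avoiding weak ascent sequences of length `k`. -/
noncomputable def weakAvoidCount (p : List ℕ) (k : ℕ) : ℕ :=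
  {s : List ℕ | s.length = k ∧ IsWeakAscentSeq s ∧ AvoidsPattern s p}.ncard

def listMax (s : List ℕ) : ℕ := s.foldr max 0
def listMin (s : List ℕ) : ℕ := s.foldr min (listMax s)

/-- Reverse-complement map: `m j = max + min - n (k+1-j)`. -/
def revComp (s : List ℕ) : List ℕ :=
  s.reverse.map (fun x => listMax s + listMin s - x)

/-- Occurrence of pattern 000: three equal entries. -/
def Contains000 (s : List ℕ) : Prop :=
  ∃ a b c, a < b ∧ b < c ∧ c < s.length ∧
    s.getD a 0 = s.getD b 0 ∧ s.getD b 0 = s.getD c 0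

/-- Occurrence of pattern 100: `n i₁ > n i₂ = n i₃`. -/
def Contains100 (s : List ℕ) : Prop :=
  ∃ a b c, a < b ∧ b < c ∧ c < s.length ∧
    s.getD b 0 < s.getD a 0 ∧ s.getD b 0 = s.getD c 0

/-- Occurrence of pattern 110: `n i₁ = n i₂ > n i₃`. -/
def Contains110 (s : List ℕ) : Prop :=
  ∃ a b c, a < b ∧ b < c ∧ c < s.length ∧
    s.getD a 0 = s.getD b 0 ∧ s.getD c 0 < s.getD b 0

/-- Occurrence of pattern 120: `n i₂ > n i₁ > n i₃`. -/
def Contains120 (s : List ℕ) : Prop :=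
  ∃ a b c, a < b ∧ b < c ∧ c < s.length ∧
    s.getD a 0 < s.getD b 0 ∧ s.getD c 0 < s.getD a 0

/-- Occurrence of pattern 201: `n i₁ > n i₃ > n i₂`. -/
def Contains201 (s : List ℕ) : Prop :=
  ∃ a b c, a < b ∧ b < c ∧ c < s.length ∧
    s.getD c 0 < s.getD a 0 ∧ s.getD b 0 < s.getD c 0

/-- Occurrence of pattern 012: `n i₁ < n i₂ < n i₃`. -/
def Contains012 (s : List ℕ) : Prop :=
  ∃ a b c, a < b ∧ b < c ∧ c < s.length ∧
    s.getD a 0 < s.getD b 0 ∧ s.getD b 0 < s.getD c 0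

/-- Occurrence of pattern 011: `n i₁ < n i₂ = n i₃`. -/
def Contains011 (s : List ℕ) : Prop :=
  ∃ a b c, a < b ∧ b < c ∧ c < s.length ∧
    s.getD a 0 < s.getD b 0 ∧ s.getD b 0 = s.getD c 0

/-- Occurrence of pattern 021: `n i₁ < n i₃ < n i₂`. -/
def Contains021 (s : List ℕ) : Prop :=
  ∃ a b c, a < b ∧ b < c ∧ c < s.length ∧
    s.getD a 0 < s.getD c 0 ∧ s.getD c 0 < s.getD b 0

/-- Occurrence of pattern 102: `n i₂ < n i₁ < n i₃`. -/
def Contains102 (s : List ℕ) : Prop :=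
  ∃ a b c, a < b ∧ b < c ∧ c < s.length ∧
    s.getD b 0 < s.getD a 0 ∧ s.getD a 0 < s.getD c 0

/-- The construction `C = 0101⋯01 W̃₁⋯W̃ₖ` from weak ascent sequences. -/
def buildC (k : ℕ) (W : Fin k → List ℕ) : List ℕ :=
  (List.replicate k ([0,1] : List ℕ)).flatten ++
    (List.ofFn (fun h : Fin k =>
      (W h).map (fun x =>
        x + 1 + ∑ j ∈ Finset.univ.filter (fun j => j < h), listMax (W j)))).flatten

/-- Coefficients of `(1 - x + x^2)^u`. -/
def Ec : ℕ → ℕ → ℤ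
  | 0, 0 => 1
  | 0, _+1 => 0
  | u+1, 0 => Ec u 0
  | u+1, 1 => Ec u 1 - Ec u 0
  | u+1, (k+2) => Ec u (k+2) - Ec u (k+1) + Ec u k

lemma Ec_eq_zero : ∀ u k, 2*u < k → Ec u k = 0 := by
  intro u
  induction u with
  | zero => intro k hk; match k, hk with
    | (k+1), _ => rfl
  | succ u ih =>
    intro k hk
    match k, hk with
    | (k+2), hk =>
      have h1 : Ec u (k+2) = 0 := ih _ (by omega)
      have h2 : Ec u (k+1) = 0 := ih _ (by omega)
      have h3 : Ec u k = 0 := ih _ (by omega)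
      show Ec u (k+2) - Ec u (k+1) + Ec u k = 0
      omega

/-- Key rewriting lemma: pairing `(1-x+x^2)^{u+1}` with `d` equals pairing
`(1-x+x^2)^u` with the "second difference" of `d`. -/
lemma Ec_succ_pair (u : ℕ) (d : ℕ → ℤ) :
    ∑ k ∈ Finset.range (2*u+3), Ec (u+1) k * d k
      = ∑ k ∈ Finset.range (2*u+1), Ec u k * (d k - d (k+1) + d (k+2)) := by
  rw [Finset.sum_range_succ' (fun k => Ec (u+1) k * d k),
      Finset.sum_range_succ' (fun k => Ec (u+1) (k+1) * d (k+1))]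
  have h0 : Ec (u+1) 0 = Ec u 0 := rfl
  have h1 : Ec (u+1) 1 = Ec u 1 - Ec u 0 := rfl
  have h2 : ∀ k, Ec (u+1) (k+2) = Ec u (k+2) - Ec u (k+1) + Ec u k := fun k => rfl
  simp only [h0, h1, h2]
  have e1 : ∑ k ∈ Finset.range (2*u+1), Ec u (k+2) * d (k+2)
      = ∑ k ∈ Finset.range (2*u+1), Ec u k * d k - Ec u 0 * d 0 - Ec u 1 * d 1 := by
    have := Finset.sum_range_succ' (fun k => Ec u k * d k) (2*u+2)
    have := Finset.sum_range_succ' (fun k => Ec u (k+1) * d (k+1)) (2*u+1)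
    have v1 : Ec u (2*u+1) = 0 := Ec_eq_zero _ _ (by omega)
    have v2 : Ec u (2*u+2) = 0 := Ec_eq_zero _ _ (by omega)
    have w1 := Finset.sum_range_succ (fun k => Ec u k * d k) (2*u+2)
    have w2 := Finset.sum_range_succ (fun k => Ec u k * d k) (2*u+1)
    -- ∑_{range(2u+3)} = ∑_{range(2u+1)} since top two coeffs vanish
    have top : ∑ k ∈ Finset.range (2*u+3), Ec u k * d k
        = ∑ k ∈ Finset.range (2*u+1), Ec u k * d k := by
      rw [w1, w2, v1, v2]; ring
    calc ∑ k ∈ Finset.range (2*u+1), Ec u (k+2) * d (k+2)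
        = ∑ k ∈ Finset.range (2*u+3), Ec u k * d k - Ec u 1 * d 1 - Ec u 0 * d 0 := by
          rw [Finset.sum_range_succ' (fun k => Ec u k * d k) (2*u+2),
              Finset.sum_range_succ' (fun k => Ec u (k+1) * d (k+1)) (2*u+1)]
          ring
      _ = _ := by rw [top]; ring
  have e2 : ∑ k ∈ Finset.range (2*u+1), Ec u (k+1) * d (k+2)
      = ∑ k ∈ Finset.range (2*u+1), Ec u k * d (k+1) - Ec u 0 * d 1 := by
    have v1 : Ec u (2*u+1) = 0 := Ec_eq_zero _ _ (by omega)
    have w2 := Finset.sum_range_succ (fun k => Ec u k * d (k+1)) (2*u+1)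
    calc ∑ k ∈ Finset.range (2*u+1), Ec u (k+1) * d (k+2)
        = ∑ k ∈ Finset.range (2*u+2), Ec u k * d (k+1) - Ec u 0 * d 1 := by
          rw [Finset.sum_range_succ' (fun k => Ec u k * d (k+1)) (2*u+1)]; ring
      _ = _ := by rw [w2, v1]; ring
  have expand : ∑ k ∈ Finset.range (2*u+1),
      (Ec u (k+2) - Ec u (k+1) + Ec u k) * d (k+2)
      = (∑ k ∈ Finset.range (2*u+1), Ec u (k+2) * d (k+2))
        - (∑ k ∈ Finset.range (2*u+1), Ec u (k+1) * d (k+2))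
        + (∑ k ∈ Finset.range (2*u+1), Ec u k * d (k+2)) := by
    rw [← Finset.sum_sub_distrib, ← Finset.sum_add_distrib]
    exact Finset.sum_congr rfl (fun k _ => by ring)
  rw [expand, e1, e2]
  have expand2 : ∑ k ∈ Finset.range (2*u+1), Ec u k * (d k - d (k+1) + d (k+2))
      = (∑ k ∈ Finset.range (2*u+1), Ec u k * d k)
        - (∑ k ∈ Finset.range (2*u+1), Ec u k * d (k+1))
        + (∑ k ∈ Finset.range (2*u+1), Ec u k * d (k+2)) := by
    rw [← Finset.sum_sub_distrib, ← Finset.sum_add_distrib]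
    exact Finset.sum_congr rfl (fun k _ => by ring)
  rw [expand2]; ring

lemma Ec_sum_one (u : ℕ) : ∑ k ∈ Finset.range (2*u+1), Ec u k = 1 := by
  induction u with
  | zero => simp [Ec]
  | succ u ih =>
    have := Ec_succ_pair u (fun _ => 1)
    simp only [mul_one] at this ⊢
    have h : (2*(u+1)+1) = 2*u+3 := by ring
    rw [h, this]
    simpa using ih

lemma starA (d : ℕ → ℤ) : ∀ u,
    ∑ k ∈ Finset.range (2*u+1), Ec u k * (∑ j ∈ Finset.range (k+2), d j)
      = ∑ k ∈ Finset.range (2*u+1), Ec u k * d k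
        + ∑ t ∈ Finset.range (u+1), ∑ k ∈ Finset.range (2*t+1), Ec t k * d (k+1) := by
  intro u
  induction u with
  | zero => simp [Ec, Finset.sum_range_succ]
  | succ u ih =>
    have h3 : 2*(u+1)+1 = 2*u+3 := by ring
    rw [h3]
    have LHS : ∑ k ∈ Finset.range (2*u+3), Ec (u+1) k * (∑ j ∈ Finset.range (k+2), d j)
        = ∑ k ∈ Finset.range (2*u+1), Ec u k * (∑ j ∈ Finset.range (k+2), d j)
          + ∑ k ∈ Finset.range (2*u+1), Ec u k * d (k+3) := by
      rw [Ec_succ_pair u (fun k => ∑ j ∈ Finset.range (k+2), d j), ← Finset.sum_add_distrib]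
      refine Finset.sum_congr rfl fun k _ => ?_
      have g1 : ∑ j ∈ Finset.range (k+3), d j = (∑ j ∈ Finset.range (k+2), d j) + d (k+2) :=
        Finset.sum_range_succ d (k+2)
      have g2 : ∑ j ∈ Finset.range (k+4), d j = (∑ j ∈ Finset.range (k+3), d j) + d (k+3) :=
        Finset.sum_range_succ d (k+3)
      rw [g2, g1]; ring
    rw [LHS, ih]
    have inner : ∑ k ∈ Finset.range (2*u+3), Ec (u+1) k * d (k+1)
        = ∑ k ∈ Finset.range (2*u+1), Ec u k * (d (k+1) - d (k+2) + d (k+3)) :=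
      Ec_succ_pair u (fun k => d (k+1))
    have first : ∑ k ∈ Finset.range (2*u+3), Ec (u+1) k * d k
        = ∑ k ∈ Finset.range (2*u+1), Ec u k * (d k - d (k+1) + d (k+2)) :=
      Ec_succ_pair u d
    rw [Finset.sum_range_succ
      (fun t => ∑ k ∈ Finset.range (2*t+1), Ec t k * d (k+1)) (u+1)]
    have h4 : 2*(u+1)+1 = 2*u+3 := by ring
    rw [h4, inner, first]
    rw [show (∑ k ∈ Finset.range (2*u+1), Ec u k * (d k - d (k+1) + d (k+2)))
        = (∑ k ∈ Finset.range (2*u+1), Ec u k * d k)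
          - (∑ k ∈ Finset.range (2*u+1), Ec u k * d (k+1))
          + (∑ k ∈ Finset.range (2*u+1), Ec u k * d (k+2)) by
      rw [← Finset.sum_sub_distrib, ← Finset.sum_add_distrib]
      exact Finset.sum_congr rfl fun k _ => by ring]
    rw [show (∑ k ∈ Finset.range (2*u+1), Ec u k * (d (k+1) - d (k+2) + d (k+3)))
        = (∑ k ∈ Finset.range (2*u+1), Ec u k * d (k+1))
          - (∑ k ∈ Finset.range (2*u+1), Ec u k * d (k+2))
          + (∑ k ∈ Finset.range (2*u+1), Ec u k * d (k+3)) by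
      rw [← Finset.sum_sub_distrib, ← Finset.sum_add_distrib]
      exact Finset.sum_congr rfl fun k _ => by ring]
    ring

lemma starB (d : ℕ → ℤ) (u : ℕ) :
    ∑ k ∈ Finset.range (2*u+1), Ec u k * (∑ j ∈ Finset.range (k+3), d j)
      = ∑ k ∈ Finset.range (2*u+3), Ec (u+1) k * d k
        + ∑ k ∈ Finset.range (2*u+1), Ec u k * d (k+1)
        + ∑ t ∈ Finset.range (u+1), ∑ k ∈ Finset.range (2*t+1), Ec t k * d (k+1) := by
  have LHS : ∑ k ∈ Finset.range (2*u+1), Ec u k * (∑ j ∈ Finset.range (k+3), d j)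
      = ∑ k ∈ Finset.range (2*u+1), Ec u k * (∑ j ∈ Finset.range (k+2), d j)
        + ∑ k ∈ Finset.range (2*u+1), Ec u k * d (k+2) := by
    rw [← Finset.sum_add_distrib]
    refine Finset.sum_congr rfl fun k _ => ?_
    rw [Finset.sum_range_succ d (k+2)]; ring
  rw [LHS, starA d u, Ec_succ_pair u d]
  rw [show (∑ k ∈ Finset.range (2*u+1), Ec u k * (d k - d (k+1) + d (k+2)))
      = (∑ k ∈ Finset.range (2*u+1), Ec u k * d k)
        - (∑ k ∈ Finset.range (2*u+1), Ec u k * d (k+1))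
        + (∑ k ∈ Finset.range (2*u+1), Ec u k * d (k+2)) by
    rw [← Finset.sum_sub_distrib, ← Finset.sum_add_distrib]
    exact Finset.sum_congr rfl fun k _ => by ring]
  ring

/-- Ballot-type counts: continuations of a Łukasiewicz-type path from height `k`. -/
def dcntAux : ℕ → ℕ → ℕ
  | 0, _ => 1
  | (n+1), k => ∑ t ∈ Finset.range (k+2), dcntAux n t

def dcnt (k n : ℕ) : ℕ := dcntAux n k

@[simp] lemma dcnt_zero (k : ℕ) : dcnt k 0 = 1 := rfl
lemma dcnt_succ (k n : ℕ) : dcnt k (n+1) = ∑ t ∈ Finset.range (k+2), dcnt t n := rfl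

/-- Counts of continuations in the 021-avoiding ascent sequence automaton;
state: `u`, and whether the last entry is zero. -/
def cnt : ℕ → ℕ → Bool → ℕ
  | 0, _, _ => 1
  | (n+1), u, true => cnt n u true + ∑ j ∈ Finset.range (u+1), cnt n (u+1-j) false
  | (n+1), u, false => cnt n u true + cnt n u false + ∑ j ∈ Finset.range u, cnt n (u-j) false

lemma cnt_reflect_true (n u : ℕ) :
    ∑ j ∈ Finset.range (u+1), cnt n (u+1-j) false
      = ∑ t ∈ Finset.range (u+1), cnt n (t+1) false := by
  have := Finset.sum_range_reflect (fun t => cnt n (t+1) false) (u+1)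
  rw [← this]
  refine Finset.sum_congr rfl fun j hj => ?_
  simp only [Finset.mem_range] at hj
  congr 1; omega

lemma cnt_reflect_false (n u : ℕ) :
    ∑ j ∈ Finset.range u, cnt n (u-j) false
      = ∑ t ∈ Finset.range u, cnt n (t+1) false := by
  have := Finset.sum_range_reflect (fun t => cnt n (t+1) false) u
  rw [← this]
  refine Finset.sum_congr rfl fun j hj => ?_
  simp only [Finset.mem_range] at hj
  congr 1; omega

lemma cnt_eq_comb : ∀ n u,
    ((cnt n u true : ℤ) = ∑ k ∈ Finset.range (2*u+1), Ec u k * (dcnt k n : ℤ))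
    ∧ ((cnt n (u+1) false : ℤ)
        = ∑ k ∈ Finset.range (2*u+1), Ec u k * (dcnt (k+1) n : ℤ)) := by
  intro n
  induction n with
  | zero =>
    intro u
    constructor <;> · simp only [cnt, dcnt_zero, Nat.cast_one, mul_one]
                      exact (Ec_sum_one u).symm
  | succ n ih =>
    intro u
    constructor
    · show ((cnt n u true + ∑ j ∈ Finset.range (u+1), cnt n (u+1-j) false : ℕ) : ℤ) = _
      rw [cnt_reflect_true]
      push_cast
      rw [(ih u).1]
      have hin : ∀ t, ((cnt n (t+1) false : ℤ))
          = ∑ k ∈ Finset.range (2*t+1), Ec t k * (dcnt (k+1) n : ℤ) := fun t => (ih t).2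
      rw [Finset.sum_congr rfl (fun t _ => hin t)]
      rw [← starA (fun j => (dcnt j n : ℤ)) u]
      refine Finset.sum_congr rfl fun k _ => ?_
      rw [dcnt_succ]
      push_cast
      ring
    · show ((cnt n (u+1) true + cnt n (u+1) false + ∑ j ∈ Finset.range (u+1), cnt n (u+1-j) false : ℕ) : ℤ) = _
      rw [cnt_reflect_true]
      push_cast
      rw [(ih (u+1)).1, (ih u).2]
      have hin : ∀ t, ((cnt n (t+1) false : ℤ))
          = ∑ k ∈ Finset.range (2*t+1), Ec t k * (dcnt (k+1) n : ℤ) := fun t => (ih t).2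
      rw [Finset.sum_congr rfl (fun t _ => hin t)]
      have h4 : 2*(u+1)+1 = 2*u+3 := by ring
      rw [h4, ← starB (fun j => (dcnt j n : ℤ)) u]
      refine Finset.sum_congr rfl fun k _ => ?_
      rw [dcnt_succ]
      push_cast
      ring

lemma cnt_zero_true_eq_dcnt (n : ℕ) : cnt n 0 true = dcnt 0 n := by
  have h := (cnt_eq_comb n 0).1
  simp only [Nat.mul_zero, Nat.zero_add, Finset.range_one, Finset.sum_singleton] at h
  have : (cnt n 0 true : ℤ) = (dcnt 0 n : ℤ) := by
    rw [h]; show Ec 0 0 * _ = _; rw [show Ec 0 0 = 1 from rfl]; ring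
  exact_mod_cast this

-- ### basic entry access
def lastE (s : List ℕ) : ℕ := s.getLast?.getD 0

def lastPos (s : List ℕ) : ℕ := s.foldl (fun acc x => if x = 0 then acc else x) 0

@[simp] lemma lastE_nil : lastE ([] : List ℕ) = 0 := rfl
@[simp] lemma lastE_append (s : List ℕ) (v : ℕ) : lastE (s ++ [v]) = v := by
  simp [lastE, List.getLast?_concat]

@[simp] lemma lastPos_nil : lastPos ([] : List ℕ) = 0 := rfl
lemma lastPos_append (s : List ℕ) (v : ℕ) :
    lastPos (s ++ [v]) = if v = 0 then lastPos s else v := by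
  simp [lastPos, List.foldl_append]

-- ### asc lemmas
@[simp] lemma asc_nil : asc [] = 0 := rfl
@[simp] lemma asc_singleton (a : ℕ) : asc [a] = 0 := rfl

lemma asc_cons₂ (a b : ℕ) (t : List ℕ) :
    asc (a :: b :: t) = (if a < b then 1 else 0) + asc (b :: t) := by
  have h : (a :: b :: t).zip (a :: b :: t).tail = (a, b) :: ((b :: t).zip t) := by
    simp [List.zip_cons_cons]
  rw [asc, h, List.filter_cons]
  by_cases hab : a < b
  · simp [hab, asc]
    omega
  · simp [hab, asc]

lemma asc_append (s : List ℕ) (hs : s ≠ []) (v : ℕ) :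
    asc (s ++ [v]) = asc s + if lastE s < v then 1 else 0 := by
  induction s with
  | nil => exact absurd rfl hs
  | cons a t ih =>
    cases t with
    | nil =>
      show asc [a, v] = asc [a] + if lastE [a] < v then 1 else 0
      rw [asc_cons₂ a v []]
      simp [lastE, Nat.add_comm]
      split_ifs with h <;> simp [h]
    | cons b t' =>
      have h1 : (a :: b :: t') ++ [v] = a :: ((b :: t') ++ [v]) := rfl
      rw [h1, show (b :: t') ++ [v] = b :: (t' ++ [v]) from rfl]
      rw [asc_cons₂ a b (t' ++ [v]), show b :: (t' ++ [v]) = (b :: t') ++ [v] from rfl,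
        ih (by simp), asc_cons₂ a b t']
      have : lastE (a :: b :: t') = lastE (b :: t') := by
        simp [lastE, List.getLast?_cons_cons]
      rw [this]; ring

lemma asc_le_length (s : List ℕ) : asc s ≤ s.length := by
  calc asc s ≤ (s.zip s.tail).length := List.length_filter_le _ _
    _ ≤ s.length := by rw [List.length_zip]; omega

-- ### getD basics
lemma getD_append_lt (s : List ℕ) (v : ℕ) {i : ℕ} (h : i < s.length) :
    (s ++ [v]).getD i 0 = s.getD i 0 := List.getD_append _ _ _ _ h

lemma getD_append_len (s : List ℕ) (v : ℕ) :
    (s ++ [v]).getD s.length 0 = v := by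
  rw [List.getD_append_right _ _ _ _ (le_refl _)]
  simp

-- ### IsAscentSeq append
lemma isAscentSeq_append (s : List ℕ) (hs : s ≠ []) (v : ℕ) :
    IsAscentSeq (s ++ [v]) ↔ IsAscentSeq s ∧ v ≤ asc s + 1 := by
  have hlen : 0 < s.length := List.length_pos_iff.2 hs
  constructor
  · rintro ⟨h0, h1⟩
    refine ⟨⟨fun _ => ?_, fun i hi hi' => ?_⟩, ?_⟩
    · rw [← getD_append_lt s v hlen]; exact h0 (by simp only [List.length_append]; omega)
    · have := h1 i hi (by simp only [List.length_append]; omega)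
      rwa [getD_append_lt s v hi', List.take_append_of_le_length (by omega)] at this
    · have := h1 s.length hlen (by simp)
      rwa [getD_append_len, List.take_append_of_le_length (le_refl _),
        List.take_length] at this
  · rintro ⟨⟨h0, h1⟩, hv⟩
    refine ⟨fun _ => ?_, fun i hi hi' => ?_⟩
    · rw [getD_append_lt s v hlen]; exact h0 hlen
    · simp only [List.length_append, List.length_singleton] at hi'
      rcases lt_or_eq_of_le (Nat.lt_succ_iff.mp hi') with h | h
      · rw [getD_append_lt s v h, List.take_append_of_le_length (by omega)]
        exact h1 i hi h
      · subst h
        rw [getD_append_len, List.take_append_of_le_length (le_refl _), List.take_length]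
        exact hv

-- ### PosMono
def PosMono (s : List ℕ) : Prop :=
  ∀ i j, i < j → j < s.length → 0 < s.getD i 0 → 0 < s.getD j 0 →
    s.getD i 0 ≤ s.getD j 0

lemma posMono_nil : PosMono [] := by intro i j _ h; simp at h

lemma posMono_append (s : List ℕ) (v : ℕ) :
    PosMono (s ++ [v]) ↔ PosMono s ∧
      (0 < v → ∀ i < s.length, 0 < s.getD i 0 → s.getD i 0 ≤ v) := by
  constructor
  · intro h
    refine ⟨fun i j hij hj hi0 hj0 => ?_, fun hv i hi hi0 => ?_⟩
    · have := h i j hij (by simp; omega)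
      rw [getD_append_lt s v (by omega), getD_append_lt s v hj] at this
      exact this hi0 hj0
    · have := h i s.length hi (by simp)
      rw [getD_append_lt s v hi, getD_append_len] at this
      exact this hi0 hv
  · rintro ⟨h1, h2⟩ i j hij hj hi0 hj0
    simp only [List.length_append, List.length_singleton] at hj
    rcases lt_or_eq_of_le (Nat.lt_succ_iff.mp hj) with h | h
    · rw [getD_append_lt s v h] at hj0 ⊢
      rw [getD_append_lt s v (by omega)] at hi0 ⊢
      exact h1 i j hij h hi0 hj0
    · subst h
      rw [getD_append_len] at hj0 ⊢
      rw [getD_append_lt s v hij] at hi0 ⊢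
      exact h2 hj0 i hij hi0

lemma lastPos_spec (s : List ℕ) :
    lastPos s = 0 ∨ (0 < lastPos s ∧ ∃ i < s.length, s.getD i 0 = lastPos s) := by
  induction s using List.reverseRecOn with
  | nil => left; rfl
  | append_singleton s v ih =>
    rw [lastPos_append]
    by_cases hv : v = 0
    · simp only [hv, if_true]
      rcases ih with h | ⟨h1, i, hi, h2⟩
      · left; exact h
      · right; exact ⟨h1, i, by simp only [List.length_append]; omega, by rwa [getD_append_lt s 0 hi]⟩
    · simp only [hv, if_false]
      right
      exact ⟨Nat.pos_of_ne_zero hv, s.length, by simp, getD_append_len s v⟩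

lemma le_lastPos (s : List ℕ) (h : PosMono s) :
    ∀ i < s.length, 0 < s.getD i 0 → s.getD i 0 ≤ lastPos s := by
  induction s using List.reverseRecOn with
  | nil => intro i hi; simp at hi
  | append_singleton s v ih =>
    intro i hi hi0
    rw [lastPos_append]
    simp only [List.length_append, List.length_singleton] at hi
    rcases lt_or_eq_of_le (Nat.lt_succ_iff.mp hi) with hlt | heq
    · rw [getD_append_lt s v hlt] at hi0 ⊢
      by_cases hv : v = 0
      · simp only [hv, if_true]
        exact ih ((posMono_append s v).1 h).1 i hlt hi0
      · simp only [hv, if_false]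
        exact ((posMono_append s v).1 h).2 (Nat.pos_of_ne_zero hv) i hlt hi0
    · subst heq
      rw [getD_append_len] at hi0 ⊢
      have hv : v ≠ 0 := by omega
      simp [hv]

-- ### the valid predicate and its append characterization
def VSeq (s : List ℕ) : Prop := IsAscentSeq s ∧ PosMono s

lemma vseq_nil : VSeq [] :=
  ⟨⟨fun h => by simp at h, fun i _ hi => by simp at hi⟩, posMono_nil⟩

lemma vseq_append_iff (s : List ℕ) (hs : s ≠ []) (v : ℕ) :
    VSeq (s ++ [v]) ↔ VSeq s ∧ (v = 0 ∨ (lastPos s ≤ v ∧ v ≤ asc s + 1)) := by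
  constructor
  · rintro ⟨hA, hP⟩
    have hA' := (isAscentSeq_append s hs v).1 hA
    have hP' := (posMono_append s v).1 hP
    refine ⟨⟨hA'.1, hP'.1⟩, ?_⟩
    by_cases hv : v = 0
    · left; exact hv
    · right
      refine ⟨?_, hA'.2⟩
      rcases lastPos_spec s with h | ⟨h1, i, hi, h2⟩
      · omega
      · rw [← h2]; exact hP'.2 (Nat.pos_of_ne_zero hv) i hi (by omega)
  · rintro ⟨⟨hA, hP⟩, hv⟩
    constructor
    · refine (isAscentSeq_append s hs v).2 ⟨hA, ?_⟩
      rcases hv with h | ⟨_, h⟩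
      · omega
      · exact h
    · refine (posMono_append s v).2 ⟨hP, fun hv0 i hi hi0 => ?_⟩
      rcases hv with h | ⟨h, _⟩
      · omega
      · exact le_trans (le_lastPos s hP i hi hi0) h

lemma vseq_invariant (s : List ℕ) (h : VSeq s) :
    lastPos s ≤ asc s + 1 ∧ (lastE s ≠ 0 → lastE s = lastPos s ∧ lastPos s ≤ asc s) := by
  induction s using List.reverseRecOn with
  | nil => exact ⟨by simp, fun h' => absurd rfl h'⟩
  | append_singleton s v ih =>
    rcases eq_or_ne s [] with rfl | hs
    · have hv : v = 0 := by
        have := h.1.1 (by simp)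
        simpa using this
      subst hv
      exact ⟨by decide, fun h' => absurd rfl h'⟩
    · have hiff := (vseq_append_iff s hs v).1 h
      have IH := ih hiff.1
      have hasc := asc_append s hs v
      by_cases hvne : v = 0
      · subst hvne
        have hasc0 : asc (s ++ [0]) = asc s := by rw [hasc]; simp
        constructor
        · rw [lastPos_append, if_pos rfl, hasc0]; exact IH.1
        · rw [lastE_append]; intro h'; exact absurd rfl h'
      · obtain ⟨hpv, hva⟩ : lastPos s ≤ v ∧ v ≤ asc s + 1 := by
          rcases hiff.2 with h' | h'
          · exact absurd h' hvne
          · exact h'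
        have hlp : lastPos (s ++ [v]) = v := by rw [lastPos_append, if_neg hvne]
        have hle : lastE (s ++ [v]) = v := lastE_append s v
        have hva' : v ≤ asc (s ++ [v]) := by
          by_cases hlt : lastE s < v
          · have : asc (s ++ [v]) = asc s + 1 := by rw [hasc, if_pos hlt]
            omega
          · have h1 : 1 ≤ v := Nat.pos_of_ne_zero hvne
            have h2 : v ≤ lastE s := by omega
            have h3 : lastE s ≠ 0 := by omega
            have h4 := IH.2 h3
            have : asc (s ++ [v]) = asc s := by rw [hasc, if_neg hlt]; omega
            omega
        refine ⟨by rw [hlp]; omega, fun _ => ⟨by rw [hle, hlp], by rw [hlp]; exact hva'⟩⟩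

-- ### characterization of 021-avoidance
lemma not_contains021_iff (s : List ℕ) (h : IsAscentSeq s) :
    ¬ Contains021 s ↔ PosMono s := by
  constructor
  · intro h021 i j hij hjlen hi0 hj0
    by_contra hle
    push_neg at hle
    have hi : i ≠ 0 := by
      intro h0
      rw [h0] at hi0
      rw [h.1 (by omega)] at hi0
      omega
    exact h021 ⟨0, i, j, by omega, hij, hjlen, by rw [h.1 (by omega)]; omega, hle⟩
  · rintro hP ⟨a, b, c, hab, hbc, hc, h1, h2⟩
    have := hP b c hbc hc (by omega) (by omega)
    omega

-- ### prefix closure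
lemma vseq_append_left : ∀ (w s : List ℕ), VSeq (s ++ w) → VSeq s := by
  intro w
  induction w using List.reverseRecOn with
  | nil => intro s h; simpa using h
  | append_singleton w x ih =>
    intro s h
    rw [← List.append_assoc] at h
    rcases eq_or_ne (s ++ w) [] with h0 | h0
    · have : s = [] := by
        rcases List.append_eq_nil_iff.mp h0 with ⟨h1, _⟩
        exact h1
      rw [this]; exact vseq_nil
    · exact ih s ((vseq_append_iff _ h0 x).1 h).1

-- ### finiteness
lemma finite_lists (n b : ℕ) : {t : List ℕ | t.length = n ∧ ∀ x ∈ t, x < b}.Finite := by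
  induction n with
  | zero =>
    refine Set.Finite.subset (Set.finite_singleton []) ?_
    rintro t ⟨ht, _⟩
    simp [List.length_eq_zero_iff.mp ht]
  | succ n ih =>
    refine Set.Finite.subset (Set.Finite.image (fun p : ℕ × List ℕ => p.1 :: p.2)
      (Set.Finite.prod (Set.finite_Iio b) ih)) ?_
    rintro t ⟨ht, hb⟩
    cases t with
    | nil => simp at ht
    | cons x t' =>
      refine ⟨(x, t'), ⟨?_, ?_, ?_⟩, rfl⟩
      · exact hb x (by simp)
      · simpa using ht
      · exact fun y hy => hb y (by simp [hy])

lemma vseq_bound : ∀ s, VSeq s → ∀ x ∈ s, x ≤ s.length := by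
  intro s
  induction s using List.reverseRecOn with
  | nil => intro _ x hx; simp at hx
  | append_singleton s v ih =>
    intro h x hx
    have hVs : VSeq s := vseq_append_left [v] s h
    rcases List.mem_append.mp hx with hx | hx
    · have := ih hVs x hx
      simp only [List.length_append, List.length_singleton]
      omega
    · have hxv : x = v := by simpa using hx
      subst hxv
      rcases eq_or_ne s [] with rfl | hs
      · have : x = 0 := by simpa using h.1.1 (by simp)
        omega
      · rcases ((vseq_append_iff s hs x).1 h).2 with h' | ⟨_, h'⟩
        · omega
        · have := asc_le_length s
          simp only [List.length_append, List.length_singleton]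
          omega

-- ### biUnion cardinality helper
lemma ncard_biUnion {α ι : Type*} [DecidableEq ι] (t : Finset ι) (f : ι → Set α)
    (hfin : ∀ i ∈ t, (f i).Finite)
    (hdisj : ∀ i ∈ t, ∀ j ∈ t, i ≠ j → Disjoint (f i) (f j)) :
    (⋃ i ∈ t, f i).ncard = ∑ i ∈ t, (f i).ncard := by
  induction t using Finset.induction_on with
  | empty => simp
  | insert _ _ ha ih =>
    rename_i a t'
    rw [Finset.set_biUnion_insert, Finset.sum_insert ha]
    rw [Set.ncard_union_eq ?_ (hfin a (by simp)) ?_]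
    · rw [ih (fun i hi => hfin i (by simp [hi]))
        (fun i hi j hj hij => hdisj i (by simp [hi]) j (by simp [hj]) hij)]
    · rw [Set.disjoint_iUnion₂_right]
      intro i hi
      exact hdisj a (by simp) i (Finset.mem_insert_of_mem hi) (by rintro rfl; exact ha hi)
    · exact Set.Finite.biUnion (t'.finite_toSet)
        (fun i hi => hfin i (Finset.mem_insert_of_mem (Finset.mem_coe.mp hi)))

lemma cnt_succ_true (n u : ℕ) :
    cnt (n+1) u true = cnt n u true + ∑ j ∈ Finset.range (u+1), cnt n (u+1-j) false := rfl
lemma cnt_succ_false (n u : ℕ) :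
    cnt (n+1) u false = cnt n u true + cnt n u false + ∑ j ∈ Finset.range u, cnt n (u-j) false := rfl

def ExtS (s : List ℕ) (m : ℕ) : Set (List ℕ) :=
  {t | VSeq t ∧ ∃ w, t = s ++ w ∧ w.length = m}

lemma extS_finite (s : List ℕ) (m : ℕ) : (ExtS s m).Finite := by
  refine Set.Finite.subset (finite_lists (s.length + m) (s.length + m + 1)) ?_
  rintro t ⟨hV, w, rfl, hw⟩
  have hlen : (s ++ w).length = s.length + m := by simp [hw]
  exact ⟨hlen, fun x hx => by have := vseq_bound _ hV x hx; omega⟩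

lemma extS_ncard : ∀ (m : ℕ) (s : List ℕ), VSeq s → s ≠ [] →
    (ExtS s m).ncard
      = cnt m (asc s + 1 - max 1 (lastPos s)) (if lastE s = 0 then true else false) := by
  intro m
  induction m with
  | zero =>
    intro s hV hs
    have hE : ExtS s 0 = {s} := by
      ext t
      constructor
      · rintro ⟨hVt, w, rfl, hw⟩
        simp [List.length_eq_zero_iff.mp hw]
      · rintro rfl
        exact ⟨hV, [], by simp⟩
    rw [hE, Set.ncard_singleton]
    split <;> rfl
  | succ m ih =>
    intro s hV hs
    have hinv := vseq_invariant s hV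
    have hpa : max 1 (lastPos s) ≤ asc s + 1 := by
      have := hinv.1; omega
    have hsplit : ExtS s (m+1)
        = ⋃ v ∈ (insert 0 (Finset.Icc (max 1 (lastPos s)) (asc s + 1)) : Finset ℕ),
            ExtS (s ++ [v]) m := by
      ext t
      constructor
      · rintro ⟨hVt, w, rfl, hw⟩
        cases w with
        | nil => simp at hw
        | cons v w' =>
          have hassoc : s ++ (v :: w') = (s ++ [v]) ++ w' := by simp
          have hVsv : VSeq (s ++ [v]) := by
            rw [hassoc] at hVt
            have h := vseq_append_left w' (s ++ [v]) hVt
            rw [← hassoc] at hVt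
            exact h
          have hvmem : v ∈ (insert 0 (Finset.Icc (max 1 (lastPos s)) (asc s + 1)) : Finset ℕ) := by
            by_cases hv0 : v = 0
            · rw [hv0]; exact Finset.mem_insert_self 0 _
            · rcases ((vseq_append_iff s hs v).1 hVsv).2 with h' | ⟨h1, h2⟩
              · exact absurd h' hv0
              · refine Finset.mem_insert_of_mem (Finset.mem_Icc.2 ⟨?_, h2⟩)
                have : 1 ≤ v := Nat.pos_of_ne_zero hv0
                omega
          exact Set.mem_biUnion hvmem ⟨hVt, w', by rw [hassoc], by simpa using hw⟩
      · intro ht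
        rcases Set.mem_iUnion₂.mp ht with ⟨v, hv, hVt, w', htw, hw⟩
        exact ⟨hVt, v :: w', by rw [htw]; simp, by simp [hw]⟩
    rw [hsplit, ncard_biUnion _ _ (fun v _ => extS_finite _ m) ?_]
    swap
    · intro i _ j _ hij
      rw [Set.disjoint_left]
      rintro t ⟨_, w, rfl, _⟩ ⟨_, w', he, _⟩
      apply hij
      have he' : s ++ (i :: w) = s ++ (j :: w') := by
        rw [show s ++ (i :: w) = (s ++ [i]) ++ w by simp, he]
        simp
      have := List.append_cancel_left he'
      injection this
    have h0mem : (0:ℕ) ∉ Finset.Icc (max 1 (lastPos s)) (asc s + 1) := by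
      simp only [Finset.mem_Icc]
      omega
    rw [Finset.sum_insert h0mem]
    -- the v = 0 term
    have hV0 : VSeq (s ++ [0]) := (vseq_append_iff s hs 0).2 ⟨hV, Or.inl rfl⟩
    have hterm0 : (ExtS (s ++ [0]) m).ncard
        = cnt m (asc s + 1 - max 1 (lastPos s)) true := by
      rw [ih (s ++ [0]) hV0 (by simp)]
      have e1 : asc (s ++ [0]) = asc s := by
        rw [asc_append s hs 0, if_neg (Nat.not_lt_zero _)]
        omega
      have e2 : lastPos (s ++ [0]) = lastPos s := by rw [lastPos_append, if_pos rfl]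
      have e3 : lastE (s ++ [0]) = 0 := lastE_append s 0
      rw [e1, e2, e3, if_pos rfl]
    rw [hterm0]
    -- per-v simplification of the positive terms
    have hterm : ∀ v ∈ Finset.Icc (max 1 (lastPos s)) (asc s + 1),
        (ExtS (s ++ [v]) m).ncard
          = cnt m (asc s + (if lastE s < v then 1 else 0) + 1 - v) false := by
      intro v hv
      rw [Finset.mem_Icc] at hv
      have hv1 : 1 ≤ v := le_trans (le_max_left 1 _) hv.1
      have hVv : VSeq (s ++ [v]) :=
        (vseq_append_iff s hs v).2 ⟨hV, Or.inr ⟨le_trans (le_max_right 1 _) hv.1, hv.2⟩⟩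
      rw [ih (s ++ [v]) hVv (by simp)]
      have e1 : asc (s ++ [v]) = asc s + (if lastE s < v then 1 else 0) :=
        asc_append s hs v
      have e2 : lastPos (s ++ [v]) = v := by
        rw [lastPos_append, if_neg (by omega)]
      have e3 : lastE (s ++ [v]) = v := lastE_append s v
      have hv0 : ¬ (v = 0) := by omega
      rw [e1, e2, e3, if_neg hv0, max_eq_right hv1]
    rw [Finset.sum_congr rfl hterm]
    by_cases hz : lastE s = 0
    · -- last entry zero: every positive step is an ascent
      rw [if_pos hz]
      have hterm' : ∀ v ∈ Finset.Icc (max 1 (lastPos s)) (asc s + 1),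
          cnt m (asc s + (if lastE s < v then 1 else 0) + 1 - v) false
            = cnt m (asc s + 2 - v) false := by
        intro v hv
        rw [Finset.mem_Icc] at hv
        have hv1 : 1 ≤ v := le_trans (le_max_left 1 _) hv.1
        rw [if_pos (by omega)]
      rw [Finset.sum_congr rfl hterm']
      rw [← Finset.Ico_add_one_right_eq_Icc, Finset.sum_Ico_eq_sum_range]
      have hsz : asc s + 1 + 1 - max 1 (lastPos s) = (asc s + 1 - max 1 (lastPos s)) + 1 := by
        omega
      rw [hsz]
      rw [cnt_succ_true]
      congr 1
      refine Finset.sum_congr rfl fun j hj => ?_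
      rw [Finset.mem_range] at hj
      congr 1
      omega
    · -- last entry positive: it equals lastPos s
      rw [if_neg hz]
      obtain ⟨hep, hpa'⟩ := hinv.2 hz
      have hp1 : 1 ≤ lastPos s := by omega
      have hmax : max 1 (lastPos s) = lastPos s := max_eq_right hp1
      rw [hmax] at *
      rw [← Finset.Ico_add_one_right_eq_Icc, Finset.sum_Ico_eq_sum_range]
      have hsz : asc s + 1 + 1 - lastPos s = (asc s + 1 - lastPos s) + 1 := by omega
      rw [hsz]
      rw [Finset.sum_range_succ'
        (fun j => cnt m (asc s + (if lastE s < lastPos s + j then 1 else 0) + 1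
          - (lastPos s + j)) false)]
      have g0 : cnt m (asc s + (if lastE s < lastPos s + 0 then 1 else 0) + 1
          - (lastPos s + 0)) false = cnt m (asc s + 1 - lastPos s) false := by
        rw [if_neg (show ¬ (lastE s < lastPos s + 0) by omega)]
        have harith : asc s + 0 + 1 - (lastPos s + 0) = asc s + 1 - lastPos s := by omega
        rw [harith]
      have gj : ∀ j ∈ Finset.range (asc s + 1 - lastPos s),
          cnt m (asc s + (if lastE s < lastPos s + (j+1) then 1 else 0) + 1
            - (lastPos s + (j+1))) false
            = cnt m ((asc s + 1 - lastPos s) - j) false := by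
        intro j hj
        rw [Finset.mem_range] at hj
        rw [if_pos (by omega)]
        congr 1
        omega
      rw [g0, Finset.sum_congr rfl gj, cnt_succ_false]
      ring

-- ### S-set as extension set
lemma vseq_single : VSeq [0] := by
  constructor
  · exact ⟨fun _ => rfl, fun i hi hi' => by simp at hi'; omega⟩
  · intro i j hij hj
    simp only [List.length_singleton] at hj
    omega

lemma vseq_set_eq (n : ℕ) : {s : List ℕ | s.length = n + 1 ∧ VSeq s} = ExtS [0] n := by
  ext s
  constructor
  · rintro ⟨hlen, hV⟩
    cases s with
    | nil => simp at hlen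
    | cons a t =>
      have ha : a = 0 := by
        have := hV.1.1 (by simp)
        simpa using this
      subst ha
      exact ⟨hV, t, rfl, by simpa using hlen⟩
  · rintro ⟨hV, w, rfl, hw⟩
    exact ⟨by simp [hw], hV⟩

lemma ncard_vseq (n : ℕ) :
    {s : List ℕ | s.length = n + 1 ∧ VSeq s}.ncard = cnt n 0 true := by
  rw [vseq_set_eq, extS_ncard n [0] vseq_single (by simp)]
  rfl

-- ### The Łukasiewicz-type model
def RV (y : List ℕ) : Prop :=
  (0 < y.length → y.getD 0 0 = 0) ∧ List.Chain' (fun a b => b ≤ a + 1) y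

lemma rv_nil : RV [] := ⟨fun h => by simp at h, List.isChain_nil⟩

lemma rv_append (y : List ℕ) (hy : y ≠ []) (v : ℕ) :
    RV (y ++ [v]) ↔ RV y ∧ v ≤ lastE y + 1 := by
  have hlen : 0 < y.length := List.length_pos_iff.2 hy
  constructor
  · rintro ⟨h0, hc⟩
    unfold List.Chain' at hc
    rw [List.isChain_append] at hc
    refine ⟨⟨fun _ => ?_, hc.1⟩, ?_⟩
    · rw [← getD_append_lt y v hlen]; exact h0 (by simp only [List.length_append]; omega)
    · obtain ⟨x, hx⟩ := List.getLast?_isSome.2 hy |> Option.isSome_iff_exists.1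
      have := hc.2.2 x hx v (by simp)
      have hlx : lastE y = x := by rw [lastE, hx]; rfl
      omega
  · rintro ⟨⟨h0, hc⟩, hv⟩
    refine ⟨fun _ => ?_, ?_⟩
    · rw [getD_append_lt y v hlen]; exact h0 hlen
    · unfold List.Chain'
      rw [List.isChain_append]
      refine ⟨hc, List.isChain_singleton v, fun x hx z hz => ?_⟩
      have hlx : lastE y = x := by rw [lastE, hx]; rfl
      have hz' : v = z := by simpa using hz
      omega

lemma rv_append_left : ∀ (w y : List ℕ), RV (y ++ w) → RV y := by
  intro w
  induction w using List.reverseRecOn with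
  | nil => intro y h; simpa using h
  | append_singleton w x ih =>
    intro y h
    rw [← List.append_assoc] at h
    rcases eq_or_ne (y ++ w) [] with h0 | h0
    · have : y = [] := (List.append_eq_nil_iff.mp h0).1
      rw [this]; exact rv_nil
    · exact ih y ((rv_append _ h0 x).1 h).1

lemma rv_lastE_bound : ∀ y : List ℕ, RV y → y ≠ [] → lastE y + 1 ≤ y.length := by
  intro y
  induction y using List.reverseRecOn with
  | nil => intro _ h; exact absurd rfl h
  | append_singleton y v ih =>
    intro h _
    rcases eq_or_ne y [] with rfl | hy
    · have : v = 0 := by simpa using h.1 (by simp)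
      subst this
      simp [lastE]
    · have ⟨hRV, hv⟩ := (rv_append y hy v).1 h
      have := ih hRV hy
      rw [lastE_append]
      simp only [List.length_append, List.length_singleton]
      omega

lemma rv_bound : ∀ y : List ℕ, RV y → ∀ x ∈ y, x ≤ y.length := by
  intro y
  induction y using List.reverseRecOn with
  | nil => intro _ x hx; simp at hx
  | append_singleton y v ih =>
    intro h x hx
    rcases List.mem_append.mp hx with hx | hx
    · have := ih (rv_append_left [v] y h) x hx
      simp only [List.length_append, List.length_singleton]; omega
    · have hxv : x = v := by simpa using hx
      subst hxv
      rcases eq_or_ne y [] with rfl | hy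
      · have : x = 0 := by simpa using h.1 (by simp)
        omega
      · have ⟨hRV, hv⟩ := (rv_append y hy x).1 h
        have := rv_lastE_bound y hRV hy
        simp only [List.length_append, List.length_singleton]
        omega

def RExt (y : List ℕ) (m : ℕ) : Set (List ℕ) :=
  {t | RV t ∧ ∃ w, t = y ++ w ∧ w.length = m}

lemma rext_finite (y : List ℕ) (m : ℕ) : (RExt y m).Finite := by
  refine Set.Finite.subset (finite_lists (y.length + m) (y.length + m + 1)) ?_
  rintro t ⟨hV, w, rfl, hw⟩
  exact ⟨by simp [hw], fun x hx => by
    have := rv_bound _ hV x hx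
    simp only [List.length_append, hw] at this ⊢
    omega⟩


lemma rext_ncard : ∀ (m : ℕ) (y : List ℕ), RV y → y ≠ [] →
    (RExt y m).ncard = dcnt (lastE y) m := by
  intro m
  induction m with
  | zero =>
    intro y hV hy
    have hE : RExt y 0 = {y} := by
      ext t
      constructor
      · rintro ⟨hVt, w, rfl, hw⟩
        simp [List.length_eq_zero_iff.mp hw]
      · rintro rfl
        exact ⟨hV, [], by simp⟩
    rw [hE, Set.ncard_singleton]; rfl
  | succ m ih =>
    intro y hV hy
    have hsplit : RExt y (m+1) = ⋃ v ∈ Finset.range (lastE y + 2), RExt (y ++ [v]) m := by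
      ext t
      constructor
      · rintro ⟨hVt, w, rfl, hw⟩
        cases w with
        | nil => simp at hw
        | cons v w' =>
          have hassoc : y ++ (v :: w') = (y ++ [v]) ++ w' := by simp
          have hVyv : RV (y ++ [v]) := by
            rw [hassoc] at hVt
            have h := rv_append_left w' (y ++ [v]) hVt
            rw [← hassoc] at hVt
            exact h
          have hvmem : v ∈ Finset.range (lastE y + 2) := by
            have := ((rv_append y hy v).1 hVyv).2
            rw [Finset.mem_range]; omega
          exact Set.mem_biUnion hvmem ⟨hVt, w', by rw [hassoc], by simpa using hw⟩
      · intro ht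
        rcases Set.mem_iUnion₂.mp ht with ⟨v, hv, hVt, w', htw, hw⟩
        exact ⟨hVt, v :: w', by rw [htw]; simp, by simp [hw]⟩
    rw [hsplit, ncard_biUnion _ _ (fun v _ => rext_finite _ m) ?_]
    swap
    · intro i _ j _ hij
      rw [Set.disjoint_left]
      rintro t ⟨_, w, rfl, _⟩ ⟨_, w', he, _⟩
      apply hij
      have he' : y ++ (i :: w) = y ++ (j :: w') := by
        rw [show y ++ (i :: w) = (y ++ [i]) ++ w by simp, he]; simp
      have := List.append_cancel_left he'
      injection this
    rw [dcnt_succ]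
    refine Finset.sum_congr rfl fun v hv => ?_
    rw [Finset.mem_range] at hv
    have hVv : RV (y ++ [v]) := (rv_append y hy v).2 ⟨hV, by omega⟩
    rw [ih (y ++ [v]) hVv (by simp), lastE_append]

lemma rv_single : RV [0] := ⟨fun _ => rfl, List.isChain_singleton 0⟩

lemma rv_set_eq (n : ℕ) : {y : List ℕ | y.length = n + 1 ∧ RV y} = RExt [0] n := by
  ext y
  constructor
  · rintro ⟨hlen, hV⟩
    cases y with
    | nil => simp at hlen
    | cons a t =>
      have ha : a = 0 := by
        have := hV.1 (by simp)
        simpa using this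
      subst ha
      exact ⟨hV, t, rfl, by simpa using hlen⟩
  · rintro ⟨hV, w, rfl, hw⟩
    exact ⟨by simp [hw], hV⟩

lemma ncard_rv (n : ℕ) :
    {y : List ℕ | y.length = n + 1 ∧ RV y}.ncard = dcnt 0 n := by
  rw [rv_set_eq, rext_ncard n [0] rv_single (by simp)]
  rfl

-- ### Catalan count for the R-model
lemma ncard_prod' {α β : Type*} (s : Set α) (t : Set β) :
    (s ×ˢ t).ncard = s.ncard * t.ncard := by
  have h := Nat.card_congr (Equiv.Set.prod s t)
  rw [Nat.card_prod] at h
  rw [← Nat.card_coe_set_eq, ← Nat.card_coe_set_eq, ← Nat.card_coe_set_eq, h]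

lemma split_last_zero : ∀ y : List ℕ, y ≠ [] → y.getD 0 0 = 0 →
    ∃ A B, y = A ++ 0 :: B ∧ ∀ x ∈ B, 0 < x := by
  intro y
  induction y using List.reverseRecOn with
  | nil => intro h; exact absurd rfl h
  | append_singleton y v ih =>
    intro _ h0
    by_cases hv : v = 0
    · subst hv
      exact ⟨y, [], by simp, by simp⟩
    · rcases eq_or_ne y [] with rfl | hy
      · simp at h0; omega
      · have h0' : y.getD 0 0 = 0 := by
          rwa [getD_append_lt y v (List.length_pos_iff.2 hy)] at h0
        obtain ⟨A, B, hAB, hB⟩ := ih hy h0'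
        refine ⟨A, B ++ [v], by rw [hAB]; simp, fun x hx => ?_⟩
        rcases List.mem_append.mp hx with hx | hx
        · exact hB x hx
        · have : x = v := by simpa using hx
          omega

def RSet (n : ℕ) : Set (List ℕ) := {y : List ℕ | y.length = n ∧ RV y}

lemma rset_finite (n : ℕ) : (RSet n).Finite := by
  refine Set.Finite.subset (finite_lists n (n+1)) ?_
  rintro y ⟨hlen, hV⟩
  exact ⟨hlen, fun x hx => by have := rv_bound y hV x hx; omega⟩

def glue (t : ℕ) : List ℕ × List ℕ → List ℕ := fun AB => AB.1 ++ 0 :: AB.2.map (· + 1)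

lemma getD_mid_zero (A C : List ℕ) (hA : A.length = t) :
    (A ++ 0 :: C).getD t 0 = 0 := by
  subst hA
  rw [List.getD_append_right _ _ _ _ (le_refl _)]
  simp

lemma getD_mid_pos (A C : List ℕ) {t j : ℕ} (hA : A.length = t) (ht : t < j)
    (hj : j < (A ++ 0 :: C).length) :
    (A ++ 0 :: C).getD j 0 = C.getD (j - t - 1) 0 := by
  subst hA
  rw [List.getD_append_right _ _ _ _ (by omega)]
  obtain ⟨e, he⟩ : ∃ e, j - A.length = e + 1 := ⟨j - A.length - 1, by omega⟩
  rw [he, List.getD_cons_succ]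
  simp

lemma rset_catalan : ∀ n, (RSet n).ncard = catalan n := by
  intro n
  induction n using Nat.strong_induction_on with
  | _ n IH =>
    match n with
    | 0 =>
      have h0 : RSet 0 = {[]} := by
        ext y
        constructor
        · rintro ⟨hlen, _⟩
          simp [List.length_eq_zero_iff.mp hlen]
        · rintro rfl
          exact ⟨rfl, rv_nil⟩
      rw [h0, Set.ncard_singleton, catalan_zero]
    | (n+1) =>
      have hsplit : RSet (n+1) = ⋃ t ∈ Finset.range (n+1), glue t '' (RSet t ×ˢ RSet (n - t)) := by
        ext y
        constructor
        · rintro ⟨hlen, hV⟩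
          have hy : y ≠ [] := by intro h; rw [h] at hlen; simp at hlen
          obtain ⟨A, B, hAB, hB⟩ := split_last_zero y hy (hV.1 (by omega))
          have hlenB : A.length + 1 + B.length = n + 1 := by
            rw [hAB] at hlen
            simp only [List.length_append, List.length_cons] at hlen
            omega
          have hmem : A.length ∈ Finset.range (n+1) := Finset.mem_range.2 (by omega)
          refine Set.mem_biUnion hmem ⟨(A, B.map (· - 1)), ⟨⟨rfl, ?_⟩, ⟨?_, ?_⟩⟩, ?_⟩
          · exact rv_append_left (0 :: B) A (by rwa [← hAB])
          · show (B.map (· - 1)).length = n - A.length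
            rw [List.length_map]
            omega
          · -- RV (B.map (· - 1))
            have hcB : List.Chain' (fun a b => b ≤ a + 1) (0 :: B) := by
              have hc := hV.2
              rw [hAB] at hc
              unfold List.Chain' at hc
              rw [List.isChain_append] at hc
              exact hc.2.1
            constructor
            · intro hBlen
              cases B with
              | nil => simp at hBlen
              | cons b B' =>
                have hb1 : b ≤ 1 := by
                  unfold List.Chain' at hcB
                  rw [List.isChain_cons_cons] at hcB
                  omega
                have hbpos : 0 < b := hB b (by simp)
                have hb : b = 1 := by omega
                simp [hb]
            · unfold List.Chain'
              rw [List.isChain_map]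
              refine List.IsChain.imp ?_ (List.IsChain.tail hcB)
              intro a b hab
              omega
          · show A ++ 0 :: (B.map (· - 1)).map (· + 1) = y
            rw [List.map_map, hAB]
            congr 1
            congr 1
            conv_rhs => rw [show B = B.map id from (List.map_id B).symm]
            exact List.map_congr_left fun x hx => by have := hB x hx; simp; omega
        · intro hy
          rcases Set.mem_iUnion₂.mp hy with ⟨t, ht, ⟨A, B⟩, ⟨⟨hAl, hAv⟩, hBl, hBv⟩, rfl⟩
          rw [Finset.mem_range] at ht
          replace hAl : A.length = t := hAl
          replace hBl : B.length = n - t := hBl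
          replace hAv : RV A := hAv
          replace hBv : RV B := hBv
          refine ⟨?_, ?_, ?_⟩
          · show (A ++ 0 :: B.map (· + 1)).length = n + 1
            simp only [List.length_append, List.length_cons, List.length_map, hAl, hBl]
            omega
          · show 0 < (A ++ 0 :: B.map (· + 1)).length → (A ++ 0 :: B.map (· + 1)).getD 0 0 = 0
            intro _
            rcases eq_or_ne A [] with rfl | hA
            · rfl
            · rw [List.getD_append _ _ _ _ (List.length_pos_iff.2 hA)]
              exact hAv.1 (List.length_pos_iff.2 hA)
          · show List.Chain' (fun a b => b ≤ a + 1) (A ++ 0 :: B.map (· + 1))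
            unfold List.Chain'
            rw [List.isChain_append]
            refine ⟨hAv.2, ?_, fun x _ z hz => ?_⟩
            · rw [List.isChain_cons]
              refine ⟨fun z hz => ?_, ?_⟩
              · cases B with
                | nil => simp at hz
                | cons b B' =>
                  have hb : b = 0 := by simpa using hBv.1 (by simp)
                  have hzb : b + 1 = z := by simpa using hz
                  omega
              · rw [List.isChain_map]
                refine List.IsChain.imp ?_ hBv.2
                intro a b hab
                omega
            · have hz0 : (0:ℕ) = z := by simpa using hz
              omega
      rw [hsplit, ncard_biUnion _ _ ?fin ?disj]
      case fin =>
        intro t _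
        exact Set.Finite.image _ (Set.Finite.prod (rset_finite t) (rset_finite (n - t)))
      case disj =>
        intro i hi j hj hij
        rw [Finset.mem_range] at hi hj
        rw [Set.disjoint_left]
        rintro y ⟨⟨A, B⟩, ⟨⟨hAl, _⟩, hBl, _⟩, rfl⟩ ⟨⟨A', B'⟩, ⟨⟨hA'l, _⟩, hB'l, _⟩, he⟩
        replace hAl : A.length = i := hAl
        replace hBl : B.length = n - i := hBl
        replace hA'l : A'.length = j := hA'l
        replace hB'l : B'.length = n - j := hB'l
        simp only [glue] at he
        apply hij
        by_contra hne
        have hlen1 : (A ++ 0 :: B.map (· + 1)).length = i + 1 + B.length := by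
          simp only [List.length_append, List.length_cons, List.length_map, hAl]
          omega
        have hlen2 : (A ++ 0 :: B.map (· + 1)).length = j + 1 + B'.length := by
          rw [← he]
          simp only [List.length_append, List.length_cons, List.length_map, hA'l]
          omega
        rcases Nat.lt_or_ge i j with hlt | hge
        · have hzj : (A ++ 0 :: B.map (· + 1)).getD j 0 = 0 := by
            rw [← he]; exact getD_mid_zero A' _ hA'l
          have hjlt : j < (A ++ 0 :: B.map (· + 1)).length := by
            rw [hlen2]; omega
          rw [getD_mid_pos A _ hAl hlt hjlt] at hzj
          have hjlen : j - i - 1 < (B.map (· + 1)).length := by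
            rw [List.length_map]; omega
          have hmem : (B.map (· + 1)).getD (j - i - 1) 0 ∈ B.map (· + 1) := by
            rw [List.getD_eq_getElem _ _ hjlen]
            exact List.getElem_mem hjlen
          rw [hzj] at hmem
          rcases List.mem_map.mp hmem with ⟨b, _, hb⟩
          simp at hb
        · have hlt : j < i := by omega
          have hzi : (A ++ 0 :: B.map (· + 1)).getD i 0 = 0 :=
            getD_mid_zero A _ hAl
          have hilt : i < (A ++ 0 :: B.map (· + 1)).length := by
            rw [hlen1]; omega
          rw [← he] at hzi hilt
          rw [getD_mid_pos A' _ hA'l hlt hilt] at hzi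
          have hjlen : i - j - 1 < (B'.map (· + 1)).length := by
            rw [List.length_map]
            rw [← he] at hlen1
            simp only [List.length_append, List.length_cons, List.length_map, hA'l] at hlen1
            omega
          have hmem : (B'.map (· + 1)).getD (i - j - 1) 0 ∈ B'.map (· + 1) := by
            rw [List.getD_eq_getElem _ _ hjlen]
            exact List.getElem_mem hjlen
          rw [hzi] at hmem
          rcases List.mem_map.mp hmem with ⟨b, _, hb⟩
          simp at hb
      have himg : ∀ t ∈ Finset.range (n+1),
          (glue t '' (RSet t ×ˢ RSet (n - t))).ncard = catalan t * catalan (n - t) := by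
        intro t ht
        rw [Finset.mem_range] at ht
        rw [Set.ncard_image_of_injOn, ncard_prod', IH t (by omega), IH (n - t) (by omega)]
        rintro ⟨A, B⟩ ⟨⟨hAl, _⟩, _, _⟩ ⟨A', B'⟩ ⟨⟨hA'l, _⟩, _, _⟩ he
        replace hAl : A.length = t := hAl
        replace hA'l : A'.length = t := hA'l
        simp only [glue] at he
        have hA : A = A' := by
          have h1 := congrArg (List.take t) he
          rw [List.take_left' hAl, List.take_left' hA'l] at h1
          exact h1
        subst hA
        have h2 := List.append_cancel_left he
        have h3 : B.map (· + 1) = B'.map (· + 1) := by injection h2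
        have hBB : B = B' := List.map_injective_iff.2 (add_left_injective 1) h3
        rw [hBB]
      rw [Finset.sum_congr rfl himg, catalan_succ n]
      exact (Fin.sum_univ_eq_sum_range (fun i => catalan i * catalan (n - i)) (n+1)).symm

/-- The number of 021-avoiding ascent sequences of length `n` is the `n`-th
Catalan number. -/
theorem stmt13 (n : ℕ) :
    {s : List ℕ | s.length = n ∧ IsAscentSeq s ∧ ¬ Contains021 s}.ncard =
      catalan n := by
  cases n with
  | zero =>
    have h0 : {s : List ℕ | s.length = 0 ∧ IsAscentSeq s ∧ ¬ Contains021 s} = {[]} := by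
      ext s
      constructor
      · rintro ⟨hlen, _⟩
        simp [List.length_eq_zero_iff.mp hlen]
      · rintro rfl
        refine ⟨rfl, ⟨fun h => by simp at h, fun i hi hlt => by simp at hlt⟩, ?_⟩
        rintro ⟨a, b, c, _, _, hc, _⟩
        simp at hc
    rw [h0, Set.ncard_singleton, catalan_zero]
  | succ m =>
    have hset : {s : List ℕ | s.length = m + 1 ∧ IsAscentSeq s ∧ ¬ Contains021 s}
        = {s : List ℕ | s.length = m + 1 ∧ VSeq s} := by
      ext s
      constructor
      · rintro ⟨h1, h2, h3⟩
        exact ⟨h1, h2, (not_contains021_iff s h2).1 h3⟩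
      · rintro ⟨h1, hV⟩
        exact ⟨h1, hV.1, (not_contains021_iff s hV.1).2 hV.2⟩
    rw [hset, ncard_vseq m, cnt_zero_true_eq_dcnt m, ← ncard_rv m]
    have hR : {y : List ℕ | y.length = m + 1 ∧ RV y} = RSet (m + 1) := rfl
    rw [hR, rset_catalan]
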